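/- Let ε > 0 and λ ∈ ℝ. Suppose F : [0, ε) → ℝ is continuous, and α : [0, ε) → ℝ is continuous on [0, ε), twice continuously differentiable on (0, ε), and satisfies α''(s) + α'(s)/s − λ·α(s) = F(s) for all s ∈ (0, ε). Then for every s ∈ (0, ε), α'(s) = (λ/s)·∫₀^s t·α(t) dt + (1/s)·∫₀^s t·F(t) dt; in particular α'(s) → 0 as s → 0⁺. -/

import Mathlib

open Set intervalIntegral Real

/-- Appendix C: integral representation of `α'` for solutions of
the degenerate ODE `α'' + α'/s - λ α = F`; in particular `α'(s) → 0` as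
`s → 0⁺`. -/
theorem degenerate_ode_deriv_formula (ε : ℝ) (hε : 0 < ε) (lam : ℝ)
    (F α : ℝ → ℝ)
    (hFcont : ContinuousOn F (Set.Ico 0 ε))
    (hαcont : ContinuousOn α (Set.Ico 0 ε))
    (hαC2 : ContDiffOn ℝ 2 α (Set.Ioo 0 ε))
    (hode : ∀ s ∈ Set.Ioo (0 : ℝ) ε,
      deriv (deriv α) s + deriv α s / s - lam * α s = F s) :
    (∀ s ∈ Set.Ioo (0 : ℝ) ε,
      deriv α s = (lam / s) * (∫ t in (0 : ℝ)..s, t * α t)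
        + (1 / s) * (∫ t in (0 : ℝ)..s, t * F t)) ∧
    Filter.Tendsto (deriv α) (nhdsWithin 0 (Set.Ioo 0 ε)) (nhds 0) := by
  set G : ℝ → ℝ := fun t => t * (lam * α t + F t) with hGdef
  set H : ℝ → ℝ := fun s => ∫ t in (0:ℝ)..s, G t with hHdef
  have hC1 : ContDiffOn ℝ 1 (deriv α) (Set.Ioo 0 ε) :=
    hαC2.deriv_of_isOpen isOpen_Ioo (by norm_num)
  have hα'' : ∀ x ∈ Set.Ioo (0:ℝ) ε, HasDerivAt (deriv α) (deriv (deriv α) x) x := fun x hx =>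
    ((hC1.differentiableOn (by norm_num)).differentiableAt (isOpen_Ioo.mem_nhds hx)).hasDerivAt
  have hα' : ∀ x ∈ Set.Ioo (0:ℝ) ε, HasDerivAt α (deriv α x) x := fun x hx =>
    ((hαC2.differentiableOn (by norm_num)).differentiableAt
      (isOpen_Ioo.mem_nhds hx)).hasDerivAt
  have hGcont : ContinuousOn G (Set.Ico 0 ε) :=
    continuousOn_id.mul ((continuousOn_const.mul hαcont).add hFcont)
  have hφ : ∀ x ∈ Set.Ioo (0:ℝ) ε, HasDerivAt (fun t => t * deriv α t) (G x) x := by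
    intro x hx
    have hx0 : x ≠ 0 := ne_of_gt hx.1
    have h2 : deriv (deriv α) x = F x + lam * α x - deriv α x / x := by
      have := hode x hx; linarith
    have hprod : HasDerivAt (fun t => t * deriv α t) (1 * deriv α x + x * deriv (deriv α) x) x :=
      (hasDerivAt_id' x).mul (hα'' x hx)
    convert hprod using 1
    rw [h2, hGdef]
    field_simp
    ring
  have hsub : ∀ {a b : ℝ}, a ∈ Set.Ioo (0:ℝ) ε → b ∈ Set.Ioo (0:ℝ) ε →
      Set.uIcc a b ⊆ Set.Ioo (0:ℝ) ε := fun ha hb =>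
    Set.ordConnected_Ioo.uIcc_subset ha hb
  have hIccsub : ∀ {s : ℝ}, s ∈ Set.Ioo (0:ℝ) ε → Set.uIcc (0:ℝ) s ⊆ Set.Ico 0 ε := by
    intro s hs
    rw [Set.uIcc_of_le hs.1.le]
    exact Set.Icc_subset_Ico_right hs.2
  have hFTC : ∀ {a b : ℝ}, a ∈ Set.Ioo (0:ℝ) ε → b ∈ Set.Ioo (0:ℝ) ε →
      (∫ t in a..b, G t) = b * deriv α b - a * deriv α a := by
    intro a b ha hb
    exact integral_eq_sub_of_hasDerivAt (fun x hx => hφ x (hsub ha hb hx))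
      ((hGcont.mono ((hsub ha hb).trans Set.Ioo_subset_Ico_self)).intervalIntegrable)
  have hGint : ∀ {s : ℝ}, s ∈ Set.Ioo (0:ℝ) ε → IntervalIntegrable G MeasureTheory.volume 0 s :=
    fun hs => (hGcont.mono (hIccsub hs)).intervalIntegrable
  set c : ℝ := ε / 2 with hcdef
  have hc : c ∈ Set.Ioo (0:ℝ) ε := ⟨by positivity, by linarith⟩
  set C : ℝ := c * deriv α c - H c with hCdef
  have hkey : ∀ s ∈ Set.Ioo (0:ℝ) ε, s * deriv α s = C + H s := by
    intro s hs
    have hadd := integral_add_adjacent_intervals (hGint hs)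
      ((hGcont.mono ((hsub hs hc).trans Set.Ioo_subset_Ico_self)).intervalIntegrable)
    have h1 : (∫ t in s..c, G t) = c * deriv α c - s * deriv α s := hFTC hs hc
    have : H s + (c * deriv α c - s * deriv α s) = H c := by rw [← h1]; exact hadd
    rw [hCdef]; linarith
  obtain ⟨M, hM⟩ := (isCompact_Icc (a := (0:ℝ)) (b := c)).exists_bound_of_continuousOn
    (hGcont.mono (Set.Icc_subset_Ico_right hc.2))
  obtain ⟨B, hB⟩ := (isCompact_Icc (a := (0:ℝ)) (b := c)).exists_bound_of_continuousOn
    (hαcont.mono (Set.Icc_subset_Ico_right hc.2))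
  have hM0 : 0 ≤ M := le_trans (norm_nonneg _) (hM 0 ⟨le_rfl, hc.1.le⟩)
  have hB0 : 0 ≤ B := le_trans (norm_nonneg _) (hB 0 ⟨le_rfl, hc.1.le⟩)
  have hHle : ∀ t ∈ Set.Ioc (0:ℝ) c, |H t| ≤ M * t := by
    intro t ht
    have := norm_integral_le_of_norm_le_const (a := 0) (b := t) (C := M) (f := G) ?_
    · simpa [abs_of_pos ht.1] using this
    · intro x hx
      rw [Set.uIoc_of_le ht.1.le] at hx
      exact hM x ⟨hx.1.le, hx.2.trans ht.2⟩
  have hCzero : C = 0 := by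
    by_contra hC
    set a : ℝ := c * Real.exp (-(M * c + 2 * B + 1) / |C|) with hadef
    have hCpos : 0 < |C| := abs_pos.mpr hC
    have hea : Real.exp (-(M * c + 2 * B + 1) / |C|) < 1 := by
      rw [Real.exp_lt_one_iff]
      have : 0 < M * c + 2 * B + 1 := by positivity
      exact div_neg_of_neg_of_pos (by linarith) hCpos
    have ha : a ∈ Set.Ioo (0:ℝ) ε := by
      refine ⟨by positivity, ?_⟩
      calc a < c * 1 := mul_lt_mul_of_pos_left hea hc.1
        _ = c := mul_one c
        _ < ε := hc.2
    have hac : a < c := by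
      calc a < c * 1 := mul_lt_mul_of_pos_left hea hc.1
        _ = c := mul_one c
    have hc0 : c ≠ 0 := ne_of_gt hc.1
    have hlog : Real.log (c / a) = (M * c + 2 * B + 1) / |C| := by
      have hla : Real.log a = Real.log c + -(M * c + 2 * B + 1) / |C| := by
        rw [hadef, Real.log_mul hc0 (Real.exp_ne_zero _), Real.log_exp]
      rw [Real.log_div hc0 (ne_of_gt ha.1), hla]
      ring
    have hαFTC : (∫ t in a..c, deriv α t) = α c - α a :=
      integral_eq_sub_of_hasDerivAt (fun x hx => hα' x (hsub ha hc hx))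
        ((hC1.continuousOn.mono (hsub ha hc)).intervalIntegrable)
    have hint1 : IntervalIntegrable (fun t => C * (1 / t)) MeasureTheory.volume a c := by
      apply ContinuousOn.intervalIntegrable
      apply ContinuousOn.mul continuousOn_const
      apply ContinuousOn.div continuousOn_const continuousOn_id
      intro x hx
      exact ne_of_gt (hsub ha hc hx).1
    have hint2 : IntervalIntegrable (deriv α) MeasureTheory.volume a c :=
      (hC1.continuousOn.mono (hsub ha hc)).intervalIntegrable
    have hlogint : (∫ t in a..c, C * (1 / t)) = C * Real.log (c / a) := by
      rw [intervalIntegral.integral_const_mul, integral_one_div]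
      intro h
      exact absurd ((hsub ha hc) h).1 (lt_irrefl 0)
    have hsplit : (∫ t in a..c, (deriv α t - C * (1 / t)))
        = (α c - α a) - C * Real.log (c / a) := by
      rw [intervalIntegral.integral_sub hint2 hint1, hαFTC, hlogint]
    have hbd : |∫ t in a..c, (deriv α t - C * (1 / t))| ≤ M * c := by
      have hnb := norm_integral_le_of_norm_le_const (a := a) (b := c) (C := M)
        (f := fun t => deriv α t - C * (1 / t)) ?_
      · have h1 : |c - a| ≤ c := by
          rw [abs_of_pos (by linarith)]; linarith [ha.1]
        calc |∫ t in a..c, (deriv α t - C * (1 / t))| ≤ M * |c - a| := hnb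
          _ ≤ M * c := mul_le_mul_of_nonneg_left h1 hM0
      · intro t ht
        rw [Set.uIoc_of_le hac.le] at ht
        have htI : t ∈ Set.Ioo (0:ℝ) ε := ⟨ha.1.trans ht.1, lt_of_le_of_lt ht.2 hc.2⟩
        have ht0 : t ≠ 0 := ne_of_gt htI.1
        have h1 : deriv α t - C * (1 / t) = H t / t := by
          have := hkey t htI
          field_simp
          linarith
        show ‖deriv α t - C * (1 / t)‖ ≤ M
        rw [h1, Real.norm_eq_abs, abs_div, abs_of_pos htI.1, div_le_iff₀ htI.1]
        exact hHle t ⟨htI.1, ht.2⟩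
    rw [hsplit] at hbd
    have hαc : |α c| ≤ B := by
      have := hB c ⟨hc.1.le, le_rfl⟩; rwa [Real.norm_eq_abs] at this
    have hαa : |α a| ≤ B := by
      have := hB a ⟨ha.1.le, hac.le⟩; rwa [Real.norm_eq_abs] at this
    have h5 : |α c - α a| ≤ 2 * B := by
      calc |α c - α a| ≤ |α c| + |α a| := abs_sub _ _
        _ ≤ 2 * B := by linarith
    have h6 : |C * Real.log (c / a)| ≤ 2 * B + M * c := by
      calc |C * Real.log (c / a)|
          = |(α c - α a) - ((α c - α a) - C * Real.log (c / a))| := by congr 1; ring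
        _ ≤ |α c - α a| + |(α c - α a) - C * Real.log (c / a)| := abs_sub _ _
        _ ≤ 2 * B + M * c := add_le_add h5 hbd
    rw [abs_mul, hlog, abs_of_nonneg (by positivity : (0:ℝ) ≤ (M * c + 2 * B + 1) / |C|)] at h6
    rw [mul_div_cancel₀ _ (ne_of_gt hCpos)] at h6
    linarith
  -- the formula
  have hform : ∀ s ∈ Set.Ioo (0:ℝ) ε, deriv α s = H s / s := by
    intro s hs
    have h := hkey s hs
    rw [hCzero, zero_add] at h
    rw [eq_div_iff (ne_of_gt hs.1)]
    linarith
  have hIα : ∀ {s : ℝ}, s ∈ Set.Ioo (0:ℝ) ε →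
      IntervalIntegrable (fun t => t * α t) MeasureTheory.volume 0 s := fun hs =>
    ((continuousOn_id.mul hαcont).mono (hIccsub hs)).intervalIntegrable
  have hIF : ∀ {s : ℝ}, s ∈ Set.Ioo (0:ℝ) ε →
      IntervalIntegrable (fun t => t * F t) MeasureTheory.volume 0 s := fun hs =>
    ((continuousOn_id.mul hFcont).mono (hIccsub hs)).intervalIntegrable
  have hHsplit : ∀ s ∈ Set.Ioo (0:ℝ) ε,
      H s = lam * (∫ t in (0:ℝ)..s, t * α t) + ∫ t in (0:ℝ)..s, t * F t := by
    intro s hs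
    rw [hHdef]
    simp only
    rw [show (∫ t in (0:ℝ)..s, G t)
        = ∫ t in (0:ℝ)..s, (lam * (t * α t) + t * F t) from
      intervalIntegral.integral_congr (fun t _ => by rw [hGdef]; ring)]
    rw [intervalIntegral.integral_add ((hIα hs).const_mul lam) (hIF hs),
      intervalIntegral.integral_const_mul]
  constructor
  · intro s hs
    rw [hform s hs, hHsplit s hs]
    have hs0 : s ≠ 0 := ne_of_gt hs.1
    field_simp
  · rw [Metric.tendsto_nhdsWithin_nhds]
    intro δ hδ
    have hG0 : Filter.Tendsto G (nhdsWithin 0 (Set.Ico 0 ε)) (nhds 0) := by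
      have h := hGcont 0 ⟨le_rfl, hε⟩
      have h00 : G 0 = 0 := by rw [hGdef]; simp
      rw [ContinuousWithinAt, h00] at h
      exact h
    rw [Metric.tendsto_nhdsWithin_nhds] at hG0
    obtain ⟨η, hη, hG0'⟩ := hG0 (δ/2) (by linarith)
    refine ⟨η, hη, ?_⟩
    intro s hs hsd
    have hs0 : 0 < s := hs.1
    have hsη : s < η := by
      rw [Real.dist_eq, sub_zero, abs_of_pos hs0] at hsd; exact hsd
    have hHb : |H s| ≤ δ / 2 * s := by
      have hnb := norm_integral_le_of_norm_le_const (a := 0) (b := s) (C := δ/2) (f := G) ?_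
      · simpa [abs_of_pos hs0] using hnb
      · intro x hx
        rw [Set.uIoc_of_le hs0.le] at hx
        have hxI : x ∈ Set.Ico (0:ℝ) ε := ⟨hx.1.le, lt_of_le_of_lt hx.2 hs.2⟩
        have hxd : dist x 0 < η := by
          rw [Real.dist_eq, sub_zero, abs_of_nonneg hx.1.le]
          exact lt_of_le_of_lt hx.2 hsη
        have := hG0' hxI hxd
        rw [Real.dist_eq, sub_zero] at this
        exact this.le
    rw [hform s hs, Real.dist_eq, sub_zero, abs_div, abs_of_pos hs0]
    have : |H s| / s ≤ δ / 2 := by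
      rw [div_le_iff₀ hs0]; linarith
    linarith
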